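/- Fix d ≥ 1, 1 ≤ s ≤ d, n ≥ 1, ε ∈ (0, 1/3], and γ > 0. Let Θ := { θ ∈ {−1/√s, 0, 1/√s}^d : θ has exactly s nonzero coordinates }, and for θ ∈ Θ define the density q_θ(x) := (1−ε)·φ_{γθ, I}(x) + ε·φ_{−((1−ε)/ε)γθ, I}(x) on ℝ^d. Let Q(x₁,…,x_n) := (1/|Θ|) ∑_{θ∈Θ} ∏_{i=1}^n q_θ(x_i) on (ℝ^d)^n. Then ∫_{(ℝ^d)^n} Q(x₁,…,x_n)² / ∏_{i=1}^n φ_{0,I}(x_i) dx₁⋯dx_n ≤ (1/|Θ|²) ∑_{θ,θ'∈Θ} exp( n γ⁴ ⟨θ,θ'⟩² / ε⁴ ). -/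

import Mathlib

open MeasureTheory Real

/-- The Gaussian density `φ_{μ,I}` on `ℝ^d` with identity covariance. -/
noncomputable def gaussI {d : ℕ} (μ : Fin d → ℝ) (x : Fin d → ℝ) : ℝ :=
  (2 * π) ^ (-(d : ℝ) / 2) * Real.exp (-(1 / 2) * ∑ i, (x i - μ i) ^ 2)

lemma gaussI_pos {d : ℕ} (μ x : Fin d → ℝ) : 0 < gaussI μ x := by
  unfold gaussI; positivity

lemma gaussI_eq_prod {d : ℕ} (μ x : Fin d → ℝ) :
    gaussI μ x = ∏ i, ((2 * π) ^ (-(1 : ℝ) / 2) * Real.exp (-(1 / 2) * (x i - μ i) ^ 2)) := by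
  unfold gaussI
  rw [Finset.prod_mul_distrib, Finset.prod_const, ← Real.exp_sum, Finset.card_univ,
    Fintype.card_fin, ← Real.rpow_natCast ((2 * π) ^ (-(1 : ℝ) / 2)) d,
    ← Real.rpow_mul (by positivity), ← Finset.mul_sum]
  congr 2
  push_cast
  ring

lemma integrable1 (c : ℝ) :
    Integrable (fun t : ℝ => (2 * π) ^ (-(1 : ℝ) / 2) * Real.exp (-(1 / 2) * (t - c) ^ 2)) := by
  apply Integrable.const_mul
  have h : Integrable (fun t : ℝ => Real.exp (-(1 / 2 : ℝ) * t ^ 2)) := by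
    have := integrable_exp_neg_mul_sq (show (0:ℝ) < 1/2 by norm_num)
    simpa using this
  exact h.comp_sub_right c

lemma integral1 (c : ℝ) :
    ∫ t : ℝ, (2 * π) ^ (-(1 : ℝ) / 2) * Real.exp (-(1 / 2) * (t - c) ^ 2) = 1 := by
  rw [integral_const_mul _ _,
    integral_sub_right_eq_self (fun t : ℝ => Real.exp (-(1 / 2) * t ^ 2)) c]
  have : ∫ t : ℝ, Real.exp (-(1 / 2) * t ^ 2) = Real.sqrt (π / (1/2)) := by
    simpa using integral_gaussian (1/2 : ℝ)
  rw [this, show π / (1/2 : ℝ) = 2 * π by ring, Real.sqrt_eq_rpow,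
    ← Real.rpow_add (by positivity)]
  norm_num

lemma integrable_gaussI {d : ℕ} (μ : Fin d → ℝ) : Integrable (gaussI μ) := by
  have h : gaussI μ = fun x : Fin d → ℝ =>
      ∏ i, (fun t : ℝ => (2 * π) ^ (-(1 : ℝ) / 2) * Real.exp (-(1 / 2) * (t - μ i) ^ 2)) (x i) :=
    funext fun x => gaussI_eq_prod μ x
  rw [h]
  exact Integrable.fintype_prod fun i => integrable1 (μ i)

lemma integral_gaussI {d : ℕ} (μ : Fin d → ℝ) : ∫ x : Fin d → ℝ, gaussI μ x = 1 := by
  simp_rw [gaussI_eq_prod μ]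
  rw [volume_pi, integral_fintype_prod_eq_prod (ι := Fin d)
    (f := fun i (t : ℝ) => (2 * π) ^ (-(1 : ℝ) / 2) * Real.exp (-(1 / 2) * (t - μ i) ^ 2))]
  simp_rw [integral1]
  simp

lemma gaussI_mul_div {d : ℕ} (a b x : Fin d → ℝ) :
    gaussI a x * gaussI b x / gaussI 0 x = Real.exp (∑ i, a i * b i) * gaussI (a + b) x := by
  rw [div_eq_iff (gaussI_pos 0 x).ne']
  unfold gaussI
  simp only [Pi.add_apply, Pi.zero_apply]
  have hsum : (-(1 / 2) * ∑ i, (x i - a i) ^ 2) + (-(1 / 2) * ∑ i, (x i - b i) ^ 2)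
      = (∑ i, a i * b i) + ((-(1 / 2) * ∑ i, (x i - (a i + b i)) ^ 2)
        + (-(1 / 2) * ∑ i, (x i - 0) ^ 2)) := by
    simp only [Finset.mul_sum, ← Finset.sum_add_distrib]
    exact Finset.sum_congr rfl fun i _ => by ring
  rw [show (2 * π) ^ (-(d:ℝ) / 2) * Real.exp (-(1 / 2) * ∑ i, (x i - a i) ^ 2) *
      ((2 * π) ^ (-(d:ℝ) / 2) * Real.exp (-(1 / 2) * ∑ i, (x i - b i) ^ 2))
      = ((2 * π) ^ (-(d:ℝ) / 2) * (2 * π) ^ (-(d:ℝ) / 2)) *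
        Real.exp ((-(1 / 2) * ∑ i, (x i - a i) ^ 2) + (-(1 / 2) * ∑ i, (x i - b i) ^ 2)) from by
    rw [Real.exp_add]; ring, hsum, Real.exp_add, Real.exp_add]
  ring

lemma exp_convex (u y : ℝ) (hu1 : -1 ≤ u) (hu2 : u ≤ 1) :
    Real.exp (u * y) ≤ ((1 + u) / 2) * Real.exp y + ((1 - u) / 2) * Real.exp (-y) := by
  have h := convexOn_exp.2 (Set.mem_univ y) (Set.mem_univ (-y))
    (by linarith : (0:ℝ) ≤ (1 + u) / 2) (by linarith : (0:ℝ) ≤ (1 - u) / 2) (by ring)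
  simp only [smul_eq_mul] at h
  rw [show (1 + u) / 2 * y + (1 - u) / 2 * (-y) = u * y by ring] at h
  exact h

lemma two_point (ε z : ℝ) (hε0 : 0 < ε) (hε1 : ε < 1) :
    (1 - ε) * Real.exp (ε * z) + ε * Real.exp (-((1 - ε) * z)) ≤ Real.exp (z ^ 2 / 2) := by
  have h1 := exp_convex ε z (by linarith) (by linarith)
  have h2 := exp_convex (-(1 - ε)) z (by linarith) (by linarith)
  rw [show -(1 - ε) * z = -((1 - ε) * z) by ring] at h2
  have hc := Real.cosh_le_exp_half_sq z
  rw [Real.cosh_eq] at hc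
  have A := mul_le_mul_of_nonneg_left h1 (by linarith : (0:ℝ) ≤ 1 - ε)
  have B := mul_le_mul_of_nonneg_left h2 hε0.le
  nlinarith [A, B, hc]

lemma scalar_bound (ε t : ℝ) (hε0 : 0 < ε) (hε3 : ε ≤ 1 / 3) :
    (1 - ε) * (1 - ε) * Real.exp t
      + (1 - ε) * ε * Real.exp (-((1 - ε) / ε * t))
      + ε * (1 - ε) * Real.exp (-((1 - ε) / ε * t))
      + ε * ε * Real.exp ((1 - ε) / ε * ((1 - ε) / ε) * t)
      ≤ Real.exp (t ^ 2 / ε ^ 4) := by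
  have hε1 : ε < 1 := by linarith
  have hεne : ε ≠ 0 := hε0.ne'
  have hg : ∀ x : ℝ, (1 - ε) * Real.exp x + ε * Real.exp (-((1 - ε) / ε * x))
      ≤ Real.exp (x ^ 2 / (2 * ε ^ 2)) := by
    intro x
    have h := two_point ε (x / ε) hε0 hε1
    rw [show ε * (x / ε) = x by field_simp,
        show (1 - ε) * (x / ε) = (1 - ε) / ε * x by field_simp,
        show (x / ε) ^ 2 / 2 = x ^ 2 / (2 * ε ^ 2) by rw [div_pow, div_div, mul_comm (ε ^ 2) 2]] at h
    exact h
  have h1 := hg t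
  have h2 := hg (-((1 - ε) / ε * t))
  rw [show -((1 - ε) / ε * -((1 - ε) / ε * t)) = (1 - ε) / ε * ((1 - ε) / ε) * t by ring,
      show (-((1 - ε) / ε * t)) ^ 2 = ((1 - ε) / ε * t) ^ 2 by ring] at h2
  have key1 : Real.exp (t ^ 2 / (2 * ε ^ 2)) ≤ Real.exp (t ^ 2 / ε ^ 4) := by
    apply Real.exp_le_exp.2
    rw [div_le_div_iff₀ (by positivity) (by positivity)]
    have h' : ε ^ 2 ≤ 1 := by nlinarith
    nlinarith [mul_le_mul_of_nonneg_left h' (mul_nonneg (sq_nonneg t) (sq_nonneg ε))]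
  have key2 : Real.exp (((1 - ε) / ε * t) ^ 2 / (2 * ε ^ 2)) ≤ Real.exp (t ^ 2 / ε ^ 4) := by
    apply Real.exp_le_exp.2
    rw [show ((1 - ε) / ε * t) ^ 2 / (2 * ε ^ 2) = (1 - ε) ^ 2 * t ^ 2 / (2 * ε ^ 4) by
      field_simp]
    rw [div_le_div_iff₀ (by positivity) (by positivity)]
    have h' : (1 - ε) ^ 2 ≤ 1 := by nlinarith
    nlinarith [mul_le_mul_of_nonneg_right h' (mul_nonneg (sq_nonneg t) (pow_pos hε0 4).le), mul_nonneg (sq_nonneg t) (pow_pos hε0 4).le]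
  have A := mul_le_mul_of_nonneg_left (h1.trans key1) (by linarith : (0:ℝ) ≤ 1 - ε)
  have B := mul_le_mul_of_nonneg_left (h2.trans key2) hε0.le
  nlinarith [A, B]

lemma integral_add4 {α : Type*} [MeasureSpace α] {f1 f2 f3 f4 : α → ℝ}
    (h1 : Integrable f1) (h2 : Integrable f2) (h3 : Integrable f3) (h4 : Integrable f4) :
    ∫ y, (f1 y + f2 y + f3 y + f4 y)
      = (∫ y, f1 y) + (∫ y, f2 y) + (∫ y, f3 y) + (∫ y, f4 y) := by
  have h12 : Integrable (fun y => f1 y + f2 y) := h1.add h2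
  have h123 : Integrable (fun y => f1 y + f2 y + f3 y) := h12.add h3
  rw [integral_add h123 h4, integral_add h12 h3, integral_add h1 h2]

/-- the Ingster–Suslina bound on the χ² second moment of the mixture of
`n`-fold products of Huber-contaminated sparse Gaussians. Vectors of `Θ`, with entries in
`{−1/√s, 0, 1/√s}` and exactly `s` nonzero coordinates, are encoded by `σ : Fin d → Fin 3`
via `θ σ i = ((σ i : ℝ) − 1)/√s` (so `σ i ≠ 1` marks the nonzero coordinates). -/
theorem stmt6 {d s n : ℕ} (hd : 1 ≤ d) (hs1 : 1 ≤ s) (hsd : s ≤ d) (hn : 1 ≤ n)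
    (ε : ℝ) (hε : ε ∈ Set.Ioc 0 (1 / 3 : ℝ)) (γ : ℝ) (hγ : 0 < γ)
    (Θ : Finset (Fin d → Fin 3))
    (hΘ : Θ = Finset.univ.filter
      (fun σ => (Finset.univ.filter (fun i => σ i ≠ 1)).card = s))
    (θ : (Fin d → Fin 3) → Fin d → ℝ)
    (hθ : ∀ σ i, θ σ i = (((σ i : ℕ) : ℝ) - 1) / Real.sqrt s)
    (q : (Fin d → Fin 3) → (Fin d → ℝ) → ℝ)
    (hq : ∀ σ x, q σ x =
      (1 - ε) * gaussI (γ • θ σ) x + ε * gaussI ((-((1 - ε) / ε) * γ) • θ σ) x) :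
    ∫ x : Fin n → Fin d → ℝ,
        ((1 / (Θ.card : ℝ)) * ∑ σ ∈ Θ, ∏ i, q σ (x i)) ^ 2 / ∏ i, gaussI 0 (x i)
      ≤ (1 / (Θ.card : ℝ) ^ 2) *
          ∑ σ ∈ Θ, ∑ σ' ∈ Θ,
            Real.exp ((n : ℝ) * γ ^ 4 * (∑ i, θ σ i * θ σ' i) ^ 2 / ε ^ 4) := by
  obtain ⟨hε0, hε3⟩ := hε
  have h1ε : (0:ℝ) ≤ 1 - ε := by linarith
  -- pointwise expansion of q σ y * q σ' y / gaussI 0 y into four Gaussian terms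
  have hexp : ∀ (σ σ' : Fin d → Fin 3) (y : Fin d → ℝ),
      q σ y * q σ' y / gaussI 0 y =
        ((1 - ε) * (1 - ε) * Real.exp (∑ i, (γ • θ σ) i * (γ • θ σ') i))
            * gaussI (γ • θ σ + γ • θ σ') y
        + ((1 - ε) * ε * Real.exp (∑ i, (γ • θ σ) i * ((-((1 - ε) / ε) * γ) • θ σ') i))
            * gaussI (γ • θ σ + (-((1 - ε) / ε) * γ) • θ σ') y
        + (ε * (1 - ε) * Real.exp (∑ i, ((-((1 - ε) / ε) * γ) • θ σ) i * (γ • θ σ') i))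
            * gaussI ((-((1 - ε) / ε) * γ) • θ σ + γ • θ σ') y
        + (ε * ε * Real.exp (∑ i, ((-((1 - ε) / ε) * γ) • θ σ) i * ((-((1 - ε) / ε) * γ) • θ σ') i))
            * gaussI ((-((1 - ε) / ε) * γ) • θ σ + (-((1 - ε) / ε) * γ) • θ σ') y := by
    intro σ σ' y
    have h4 : ∀ (w w' : ℝ) (u v : Fin d → ℝ),
        (w * gaussI u y) * (w' * gaussI v y) / gaussI 0 y
          = (w * w' * Real.exp (∑ i, u i * v i)) * gaussI (u + v) y := by
      intro w w' u v
      rw [show (w * gaussI u y) * (w' * gaussI v y) = (w * w') * (gaussI u y * gaussI v y) by ring,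
        mul_div_assoc, gaussI_mul_div]
      ring
    rw [hq, hq, show ((1 - ε) * gaussI (γ • θ σ) y + ε * gaussI ((-((1 - ε) / ε) * γ) • θ σ) y) *
        ((1 - ε) * gaussI (γ • θ σ') y + ε * gaussI ((-((1 - ε) / ε) * γ) • θ σ') y)
        = ((1 - ε) * gaussI (γ • θ σ) y) * ((1 - ε) * gaussI (γ • θ σ') y)
          + (((1 - ε) * gaussI (γ • θ σ) y) * (ε * gaussI ((-((1 - ε) / ε) * γ) • θ σ') y)
          + ((ε * gaussI ((-((1 - ε) / ε) * γ) • θ σ) y) * ((1 - ε) * gaussI (γ • θ σ') y)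
          + (ε * gaussI ((-((1 - ε) / ε) * γ) • θ σ) y)
              * (ε * gaussI ((-((1 - ε) / ε) * γ) • θ σ') y))) by ring,
      add_div, add_div, add_div, h4, h4, h4, h4]
    ring
  -- nonnegativity of q
  have hqnn : ∀ (σ : Fin d → Fin 3) (y : Fin d → ℝ), 0 ≤ q σ y := by
    intro σ y
    rw [hq]
    have g1 := gaussI_pos (γ • θ σ) y
    have g2 := gaussI_pos ((-((1 - ε) / ε) * γ) • θ σ) y
    nlinarith
  -- integrability of each cross term on ℝ^d
  have hInt1 : ∀ (σ σ' : Fin d → Fin 3),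
      Integrable (fun y : Fin d → ℝ => q σ y * q σ' y / gaussI 0 y) := by
    intro σ σ'
    simp only [hexp σ σ']
    exact ((((integrable_gaussI _).const_mul _).add
        ((integrable_gaussI _).const_mul _)).add
        ((integrable_gaussI _).const_mul _)).add
        ((integrable_gaussI _).const_mul _)
  -- nonnegativity of the cross integral
  have hInn : ∀ (σ σ' : Fin d → Fin 3),
      0 ≤ ∫ y : Fin d → ℝ, q σ y * q σ' y / gaussI 0 y := by
    intro σ σ'
    exact integral_nonneg fun y =>
      div_nonneg (mul_nonneg (hqnn σ y) (hqnn σ' y)) (gaussI_pos 0 y).le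
  -- value bound for the cross integral
  have hIval : ∀ (σ σ' : Fin d → Fin 3),
      (∫ y : Fin d → ℝ, q σ y * q σ' y / gaussI 0 y)
        ≤ Real.exp (γ ^ 4 * (∑ i, θ σ i * θ σ' i) ^ 2 / ε ^ 4) := by
    intro σ σ'
    set ρ : ℝ := ∑ i, θ σ i * θ σ' i with hρ
    have esum : ∀ c c' : ℝ, (∑ i, (c • θ σ) i * (c' • θ σ') i) = c * c' * ρ := by
      intro c c'
      rw [hρ, Finset.mul_sum]
      exact Finset.sum_congr rfl fun i _ => by simp only [Pi.smul_apply, smul_eq_mul]; ring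
    have hi1 : Integrable (fun y : Fin d → ℝ =>
        ((1 - ε) * (1 - ε) * Real.exp (∑ i, (γ • θ σ) i * (γ • θ σ') i))
          * gaussI (γ • θ σ + γ • θ σ') y) := (integrable_gaussI _).const_mul _
    have hi2 : Integrable (fun y : Fin d → ℝ =>
        ((1 - ε) * ε * Real.exp (∑ i, (γ • θ σ) i * ((-((1 - ε) / ε) * γ) • θ σ') i))
          * gaussI (γ • θ σ + (-((1 - ε) / ε) * γ) • θ σ') y) := (integrable_gaussI _).const_mul _
    have hi3 : Integrable (fun y : Fin d → ℝ =>
        (ε * (1 - ε) * Real.exp (∑ i, ((-((1 - ε) / ε) * γ) • θ σ) i * (γ • θ σ') i))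
          * gaussI ((-((1 - ε) / ε) * γ) • θ σ + γ • θ σ') y) := (integrable_gaussI _).const_mul _
    have hi4 : Integrable (fun y : Fin d → ℝ =>
        (ε * ε * Real.exp (∑ i, ((-((1 - ε) / ε) * γ) • θ σ) i
            * ((-((1 - ε) / ε) * γ) • θ σ') i))
          * gaussI ((-((1 - ε) / ε) * γ) • θ σ + (-((1 - ε) / ε) * γ) • θ σ') y) :=
      (integrable_gaussI _).const_mul _
    have hval : (∫ y : Fin d → ℝ, q σ y * q σ' y / gaussI 0 y)
        = (1 - ε) * (1 - ε) * Real.exp (∑ i, (γ • θ σ) i * (γ • θ σ') i)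
          + (1 - ε) * ε * Real.exp (∑ i, (γ • θ σ) i * ((-((1 - ε) / ε) * γ) • θ σ') i)
          + ε * (1 - ε) * Real.exp (∑ i, ((-((1 - ε) / ε) * γ) • θ σ) i * (γ • θ σ') i)
          + ε * ε * Real.exp (∑ i, ((-((1 - ε) / ε) * γ) • θ σ) i
              * ((-((1 - ε) / ε) * γ) • θ σ') i) := by
      simp only [hexp σ σ']
      rw [integral_add4 hi1 hi2 hi3 hi4, integral_const_mul, integral_const_mul,
        integral_const_mul, integral_const_mul, integral_gaussI, integral_gaussI,
        integral_gaussI, integral_gaussI]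
      ring
    rw [hval, esum, esum, esum, esum,
      show γ * γ * ρ = γ ^ 2 * ρ by ring,
      show γ * (-((1 - ε) / ε) * γ) * ρ = -((1 - ε) / ε * (γ ^ 2 * ρ)) by ring,
      show (-((1 - ε) / ε) * γ) * γ * ρ = -((1 - ε) / ε * (γ ^ 2 * ρ)) by ring,
      show (-((1 - ε) / ε) * γ) * (-((1 - ε) / ε) * γ) * ρ
        = (1 - ε) / ε * ((1 - ε) / ε) * (γ ^ 2 * ρ) by ring,
      show γ ^ 4 * ρ ^ 2 / ε ^ 4 = (γ ^ 2 * ρ) ^ 2 / ε ^ 4 by ring]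
    exact scalar_bound ε (γ ^ 2 * ρ) hε0 hε3
  -- integrability of products over the n samples
  have hProd : ∀ (σ σ' : Fin d → Fin 3),
      Integrable (fun x : Fin n → Fin d → ℝ =>
        ∏ i, (q σ (x i) * q σ' (x i) / gaussI 0 (x i))) := by
    intro σ σ'
    exact Integrable.fintype_prod
      (f := fun _ : Fin n => fun y : Fin d → ℝ => q σ y * q σ' y / gaussI 0 y)
      fun _ => hInt1 σ σ'
  -- tensorization
  have hpow : ∀ (σ σ' : Fin d → Fin 3),
      (∫ x : Fin n → Fin d → ℝ, ∏ i, (q σ (x i) * q σ' (x i) / gaussI 0 (x i)))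
        = (∫ y : Fin d → ℝ, q σ y * q σ' y / gaussI 0 y) ^ n := by
    intro σ σ'
    have := integral_fintype_prod_eq_pow (ι := Fin n) (μ := (volume : Measure (Fin d → ℝ)))
      (fun y : Fin d → ℝ => q σ y * q σ' y / gaussI 0 y)
    rw [← volume_pi] at this
    simpa using this
  -- pointwise rewriting of the integrand
  have hpt : ∀ x : Fin n → Fin d → ℝ,
      ((1 / (Θ.card : ℝ)) * ∑ σ ∈ Θ, ∏ i, q σ (x i)) ^ 2 / ∏ i, gaussI 0 (x i)
        = (1 / (Θ.card : ℝ) ^ 2) * ∑ σ ∈ Θ, ∑ σ' ∈ Θ,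
            ∏ i, (q σ (x i) * q σ' (x i) / gaussI 0 (x i)) := by
    intro x
    have h1 : ((1 / (Θ.card : ℝ)) * ∑ σ ∈ Θ, ∏ i, q σ (x i)) ^ 2 / ∏ i, gaussI 0 (x i)
        = (1 / (Θ.card : ℝ) ^ 2) *
            (((∑ σ ∈ Θ, ∏ i, q σ (x i)) * (∑ σ' ∈ Θ, ∏ i, q σ' (x i)))
              / ∏ i, gaussI 0 (x i)) := by ring
    rw [h1, Finset.sum_mul_sum]
    simp only [Finset.sum_div]
    congr 1
    refine Finset.sum_congr rfl fun σ _ => Finset.sum_congr rfl fun σ' _ => ?_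
    rw [← Finset.prod_mul_distrib, ← Finset.prod_div_distrib]
  -- main chain
  calc ∫ x : Fin n → Fin d → ℝ,
        ((1 / (Θ.card : ℝ)) * ∑ σ ∈ Θ, ∏ i, q σ (x i)) ^ 2 / ∏ i, gaussI 0 (x i)
      = ∫ x : Fin n → Fin d → ℝ, (1 / (Θ.card : ℝ) ^ 2) * ∑ σ ∈ Θ, ∑ σ' ∈ Θ,
            ∏ i, (q σ (x i) * q σ' (x i) / gaussI 0 (x i)) :=
        integral_congr_ae (Filter.Eventually.of_forall hpt)
    _ = (1 / (Θ.card : ℝ) ^ 2) * ∑ σ ∈ Θ, ∑ σ' ∈ Θ,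
          ∫ x : Fin n → Fin d → ℝ, ∏ i, (q σ (x i) * q σ' (x i) / gaussI 0 (x i)) := by
        rw [integral_const_mul, integral_finset_sum _
          (fun σ _ => integrable_finset_sum _ fun σ' _ => hProd σ σ')]
        exact congrArg _ (Finset.sum_congr rfl fun σ _ =>
          integral_finset_sum _ fun σ' _ => hProd σ σ')
    _ ≤ (1 / (Θ.card : ℝ) ^ 2) * ∑ σ ∈ Θ, ∑ σ' ∈ Θ,
          Real.exp ((n : ℝ) * γ ^ 4 * (∑ i, θ σ i * θ σ' i) ^ 2 / ε ^ 4) := by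
        apply mul_le_mul_of_nonneg_left _ (by positivity)
        refine Finset.sum_le_sum fun σ _ => Finset.sum_le_sum fun σ' _ => ?_
        rw [hpow σ σ']
        calc (∫ y : Fin d → ℝ, q σ y * q σ' y / gaussI 0 y) ^ n
            ≤ (Real.exp (γ ^ 4 * (∑ i, θ σ i * θ σ' i) ^ 2 / ε ^ 4)) ^ n :=
              pow_le_pow_left₀ (hInn σ σ') (hIval σ σ') n
          _ = Real.exp ((n : ℝ) * (γ ^ 4 * (∑ i, θ σ i * θ σ' i) ^ 2 / ε ^ 4)) :=
              (Real.exp_nat_mul _ n).symm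
          _ = Real.exp ((n : ℝ) * γ ^ 4 * (∑ i, θ σ i * θ σ' i) ^ 2 / ε ^ 4) := by
              congr 1; ring
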